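/- For a set of four pure qubit states {|φ_1⟩,…,|φ_4⟩} ⊂ ℂ² to be antidistinguishable it is necessary that there exist strictly positive reals α_1,…,α_4 with Σ_j α_j |φ_j⟩⟨φ_j| = I. The set {|0⟩, |1⟩, |+⟩, |i₊⟩} with |i₊⟩ = (|0⟩ + i|1⟩)/√2 admits no such positive decomposition of the identity, hence is not antidistinguishable. -/

import Mathlib

open Matrix Complex
open scoped ComplexOrder

noncomputable section

/-- Outer product `|v⟩⟨v|`. -/
def outer {n : Type*} [Fintype n] (v : n → ℂ) : Matrix n n ℂ := vecMulVec v (star v)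

/-- Expectation value `⟨v|M|v⟩`. -/
def expVal {n : Type*} [Fintype n] (M : Matrix n n ℂ) (v : n → ℂ) : ℂ := star v ⬝ᵥ (M *ᵥ v)

/-- Inner product `⟨v|w⟩`. -/
def ip {n : Type*} [Fintype n] (v w : n → ℂ) : ℂ := ∑ i, star (v i) * w i

/-- Strong antidistinguishability of a family of pure states in `ℂ^d`. -/
def PureAntidist {d n : ℕ} (φ : Fin n → (Fin d → ℂ)) : Prop :=
  ∃ P : Fin n → Matrix (Fin d) (Fin d) ℂ,
    (∀ j, (P j).PosSemidef) ∧
    (∑ j, P j) = 1 ∧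
    (∀ j, expVal (P j) (φ j) = 0) ∧
    (∀ j, 0 < (∑ i, expVal (P j) (φ i)).re)

/-- The states `|0⟩, |1⟩, |+⟩, |i₊⟩`. -/
def φ₀ : Fin 4 → (Fin 2 → ℂ) :=
  ![![1, 0], ![0, 1],
    ![(1 / Real.sqrt 2 : ℝ), (1 / Real.sqrt 2 : ℝ)],
    ![(1 / Real.sqrt 2 : ℝ), (1 / Real.sqrt 2 : ℝ) * Complex.I]]

/-- A traceless 2×2 matrix annihilating a unit vector on both sides is zero. -/
lemma lemA (M : Matrix (Fin 2) (Fin 2) ℂ) (v : Fin 2 → ℂ)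
    (hn : star (v 0) * v 0 + star (v 1) * v 1 = 1)
    (ht : M 0 0 + M 1 1 = 0)
    (h1 : M 0 0 * v 0 + M 0 1 * v 1 = 0)
    (h2 : M 1 0 * v 0 + M 1 1 * v 1 = 0)
    (h3 : star (v 0) * M 0 0 + star (v 1) * M 1 0 = 0)
    (h4 : star (v 0) * M 0 1 + star (v 1) * M 1 1 = 0) :
    M = 0 := by
  simp only [Complex.star_def] at hn h3 h4
  have hp : M 0 0 = 0 := by
    linear_combination (-(M 0 0)) * hn + (starRingEnd ℂ) (v 0) * h1 - v 1 * h4 +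
      (starRingEnd ℂ) (v 1) * v 1 * ht
  have hs : M 1 1 = 0 := by linear_combination ht - hp
  have hq : M 0 1 = 0 := by
    linear_combination (-(M 0 1)) * hn + v 0 * h4 + (starRingEnd ℂ) (v 1) * h1 -
      v 0 * (starRingEnd ℂ) (v 1) * ht
  have hr : M 1 0 = 0 := by
    linear_combination (-(M 1 0)) * hn + (starRingEnd ℂ) (v 0) * h2 + v 1 * h3 -
      (starRingEnd ℂ) (v 0) * v 1 * ht
  ext i j
  fin_cases i <;> fin_cases j <;> simpa using ‹_›

/-- A PSD 2×2 matrix with `⟨v|M|v⟩ = 0` for a unit `v` equals `tr M • (1 - |v⟩⟨v|)`. -/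
lemma key (M : Matrix (Fin 2) (Fin 2) ℂ) (v : Fin 2 → ℂ)
    (hM : M.PosSemidef)
    (hn : star (v 0) * v 0 + star (v 1) * v 1 = 1)
    (hexp : star v ⬝ᵥ (M *ᵥ v) = 0) :
    M = M.trace • (1 - outer v) := by
  have hn' : (starRingEnd ℂ) (v 0) * v 0 + (starRingEnd ℂ) (v 1) * v 1 = 1 := by
    simpa [Complex.star_def] using hn
  have hMv : M *ᵥ v = 0 := (hM.dotProduct_mulVec_zero_iff v).mp hexp
  have h1 : M 0 0 * v 0 + M 0 1 * v 1 = 0 := by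
    simpa [mulVec, dotProduct, Fin.sum_univ_two] using congrFun hMv 0
  have h2 : M 1 0 * v 0 + M 1 1 * v 1 = 0 := by
    simpa [mulVec, dotProduct, Fin.sum_univ_two] using congrFun hMv 1
  have hherm : ∀ i k, star (M k i) = M i k := fun i k => congrFun (congrFun hM.1 i) k
  have h3 : (starRingEnd ℂ) (v 0) * M 0 0 + (starRingEnd ℂ) (v 1) * M 1 0 = 0 := by
    have h := congrArg star h1
    simp only [star_add, star_mul', hherm, star_zero, Complex.star_def] at h
    linear_combination h
  have h4 : (starRingEnd ℂ) (v 0) * M 0 1 + (starRingEnd ℂ) (v 1) * M 1 1 = 0 := by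
    have h := congrArg star h2
    simp only [star_add, star_mul', hherm, star_zero, Complex.star_def] at h
    linear_combination h
  have htr : M.trace = M 0 0 + M 1 1 := by rw [trace_fin_two]
  have hz := lemA (M - M.trace • (1 - outer v)) v hn ?_ ?_ ?_ ?_ ?_
  · exact sub_eq_zero.mp hz
  all_goals
    simp only [Matrix.sub_apply, Matrix.smul_apply, Matrix.one_apply, outer, vecMulVec_apply,
      Pi.star_apply, Complex.star_def, htr, smul_eq_mul]
    norm_num
  · linear_combination (M 0 0 + M 1 1) * hn'
  · linear_combination h1 + (M 0 0 + M 1 1) * v 0 * hn'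
  · linear_combination h2 + (M 0 0 + M 1 1) * v 1 * hn'
  · linear_combination h3 + (M 0 0 + M 1 1) * (starRingEnd ℂ) (v 0) * hn'
  · linear_combination h4 + (M 0 0 + M 1 1) * (starRingEnd ℂ) (v 1) * hn'

lemma trace_facts (M : Matrix (Fin 2) (Fin 2) ℂ) (hM : M.PosSemidef) :
    ((M.trace.re : ℝ) : ℂ) = M.trace ∧ 0 ≤ M.trace.re := by
  constructor
  · have hc : (starRingEnd ℂ) M.trace = M.trace := by
      rw [← Complex.star_def, ← trace_conjTranspose, hM.1]
    exact (Complex.conj_eq_iff_re.mp hc)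
  · have h0 := hM.dotProduct_mulVec_nonneg (Pi.single 0 1)
    have h1 := hM.dotProduct_mulVec_nonneg (Pi.single 1 1)
    have e0 : star (Pi.single 0 1 : Fin 2 → ℂ) ⬝ᵥ M *ᵥ Pi.single 0 1 = M 0 0 := by
      simp [dotProduct, mulVec, Fin.sum_univ_two, Pi.single_apply]
    have e1 : star (Pi.single 1 1 : Fin 2 → ℂ) ⬝ᵥ M *ᵥ Pi.single 1 1 = M 1 1 := by
      simp [dotProduct, mulVec, Fin.sum_univ_two, Pi.single_apply]
    rw [e0] at h0; rw [e1] at h1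
    have r0 := Complex.le_def.mp h0
    have r1 := Complex.le_def.mp h1
    rw [trace_fin_two]
    simp only [Complex.add_re]
    simp at r0 r1
    linarith [r0.1, r1.1]

/-- Antidistinguishability of four qubit pure states requires a strictly positive
decomposition of the identity; the set `{|0⟩, |1⟩, |+⟩, |i₊⟩}` admits none, hence is
not antidistinguishable. -/
theorem qubit_four_states_necessary_condition :
    (∀ φ : Fin 4 → (Fin 2 → ℂ), (∀ j, ∑ i, Complex.normSq (φ j i) = 1) →
      PureAntidist φ →
      ∃ α : Fin 4 → ℝ, (∀ j, 0 < α j) ∧ (∑ j, ((α j : ℂ) • outer (φ j))) = 1) ∧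
    (¬ ∃ α : Fin 4 → ℝ, (∀ j, 0 < α j) ∧ (∑ j, ((α j : ℂ) • outer (φ₀ j))) = 1) ∧
    ¬ PureAntidist φ₀ := by
  have part1 : ∀ φ : Fin 4 → (Fin 2 → ℂ), (∀ j, ∑ i, Complex.normSq (φ j i) = 1) →
      PureAntidist φ →
      ∃ α : Fin 4 → ℝ, (∀ j, 0 < α j) ∧ (∑ j, ((α j : ℂ) • outer (φ j))) = 1 := by
    rintro φ hnorm ⟨P, hPSD, hsum, hzero, hpos⟩
    have hu : ∀ j, star (φ j 0) * φ j 0 + star (φ j 1) * φ j 1 = 1 := by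
      intro j
      have h2 := hnorm j
      rw [Fin.sum_univ_two] at h2
      calc star (φ j 0) * φ j 0 + star (φ j 1) * φ j 1
          = ((Complex.normSq (φ j 0) + Complex.normSq (φ j 1) : ℝ) : ℂ) := by
            push_cast
            rw [Complex.normSq_eq_conj_mul_self, Complex.normSq_eq_conj_mul_self]
            simp [Complex.star_def]
        _ = 1 := by rw [h2]; norm_num
    have hP : ∀ j, P j = (P j).trace • (1 - outer (φ j)) := fun j =>
      key _ _ (hPSD j) (hu j) (hzero j)
    have htf := fun j => trace_facts (P j) (hPSD j)
    have hne : ∀ j, (P j).trace ≠ 0 := by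
      intro j h0
      have hPz : P j = 0 := by rw [hP j, h0, zero_smul]
      have := hpos j
      rw [hPz] at this
      simp [expVal] at this
    have hs2 : ∑ j, (P j).trace = 2 := by
      have h := congrArg Matrix.trace hsum
      rw [trace_sum, trace_one] at h
      simpa using h
    refine ⟨fun j => ((P j).trace.re), ?_, ?_⟩
    · intro j
      rcases lt_or_eq_of_le (htf j).2 with h | h
      · exact h
      · exfalso
        apply hne j
        rw [← (htf j).1, ← h]
        norm_num
    · have gen : ∀ (M X : Matrix (Fin 2) (Fin 2) ℂ) (c : ℂ), M = c • ((1 : Matrix (Fin 2) (Fin 2) ℂ) - X) →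
          c • X = c • (1 : Matrix (Fin 2) (Fin 2) ℂ) - M := by
        intro M X c h
        rw [h, smul_sub]
        abel
      have expand : ∀ j, ((((P j).trace.re : ℝ) : ℂ)) • outer (φ j)
          = (P j).trace • (1 : Matrix (Fin 2) (Fin 2) ℂ) - P j := by
        intro j
        rw [(htf j).1]
        exact gen _ _ _ (hP j)
      rw [Finset.sum_congr rfl (fun j _ => expand j), Finset.sum_sub_distrib, hsum,
        ← Finset.sum_smul, hs2]
      rw [two_smul]
      abel
  have part2 : ¬ ∃ α : Fin 4 → ℝ, (∀ j, 0 < α j) ∧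
      (∑ j, ((α j : ℂ) • outer (φ₀ j))) = 1 := by
    rintro ⟨α, hα, hs⟩
    have h01 := congrFun (congrFun hs 0) 1
    simp only [Matrix.sum_apply, Matrix.smul_apply, outer, vecMulVec_apply, Pi.star_apply,
      φ₀, Fin.sum_univ_four, Matrix.one_apply, smul_eq_mul,
      Matrix.cons_val_zero, Matrix.cons_val_one, Matrix.head_cons,
      Matrix.cons_val_two, Matrix.cons_val_three, Matrix.tail_cons,
      star_one, star_zero, mul_one, mul_zero, zero_mul, one_mul,
      Complex.star_def, Complex.conj_ofReal, _root_.map_mul, Complex.conj_I] at h01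
    have hre := congrArg Complex.re h01
    simp [Complex.add_re, Complex.mul_re, Complex.ofReal_re, Complex.ofReal_im] at hre
    exact absurd hre (hα 2).ne'
  exact ⟨part1, part2, fun h => part2 (part1 φ₀ (by
    intro j
    fin_cases j <;>
      simp [φ₀, Fin.sum_univ_two, Complex.normSq_mul, Complex.normSq_ofReal] <;>
      norm_num) h)⟩
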